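/- Let n be a nonempty finite type and P, Π, D ∈ Matrix n n ℝ, where Π has all rows equal to some vector π : n → ℝ (Π i j = π j for all i, j), D has zero row sums (∑_j D i j = 0 for every i), and there exist C ≥ 0 and r ∈ [0,1) with ‖P^l − Π‖ ≤ C·r^l for all l ∈ ℕ. Let (Ω, μ) be a probability space and X : Ω → ℕ a measurable random variable with μ{X ≥ t} > 0 for every t ∈ ℕ. Then the estimator Γ : Ω → Matrix n n ℝ, Γ(ω) = ∑_{t=0}^{X ω} (μ{X ≥ t})⁻¹ • (D * P^t), is Bochner integrable, and Π * (∫_Ω Γ dμ) = lim_{t→∞} ∑_{l=1}^{t} P^{t-l} * D * P^{l-1}. -/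

import Mathlib

open MeasureTheory

attribute [local instance] Matrix.linftyOpNormedRing Matrix.linftyOpNormedAlgebra

/-- Any function of a measurable `ℕ`-valued random variable is strongly measurable. -/
lemma stronglyMeasurable_comp_nat {E Ω : Type*} [TopologicalSpace E] [MeasurableSpace Ω]
    (g : ℕ → E) {X : Ω → ℕ} (hX : Measurable X) :
    StronglyMeasurable (fun ω => g (X ω)) := by
  refine ⟨fun k => (SimpleFunc.ofFinite (fun i : Fin (k + 1) => g i)).comp
    (fun ω => (⟨min (X ω) k, by omega⟩ : Fin (k + 1)))
    (Measurable.comp (measurable_from_top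
      (f := fun m : ℕ => (⟨min m k, by omega⟩ : Fin (k + 1)))) hX), fun ω => ?_⟩
  refine Filter.Tendsto.congr' ?_ (tendsto_const_nhds (x := g (X ω)))
  filter_upwards [Filter.eventually_ge_atTop (X ω)] with k hk
  simp [SimpleFunc.comp, SimpleFunc.ofFinite, Nat.min_eq_left hk]

/-- Proposition 1 combined with the randomly-stopped estimator of Theorem 1:
the estimator `Γ` is Bochner integrable and `Π * E[Γ]` equals the infinite-horizon
gradient `lim_{t→∞} ∑_{l=1}^{t} P^{t-l} D P^{l-1}`. -/
theorem inf_sgd_estimator_unbiased {n : Type*} [Fintype n] [Nonempty n] [DecidableEq n]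
    (P Pi D : Matrix n n ℝ) (π : n → ℝ)
    (hPi : ∀ i j, Pi i j = π j)
    (hD : D.mulVec (fun _ => (1 : ℝ)) = 0)
    (C : ℝ) (hC : 0 ≤ C) (r : ℝ) (hr0 : 0 ≤ r) (hr1 : r < 1)
    (hgeo : ∀ l : ℕ, ‖P ^ l - Pi‖ ≤ C * r ^ l)
    {Ω : Type*} [MeasurableSpace Ω] (μ : Measure Ω) [IsProbabilityMeasure μ]
    (X : Ω → ℕ) (hX : Measurable X)
    (hpos : ∀ t : ℕ, 0 < μ {ω | t ≤ X ω}) :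
    @Integrable (Matrix n n ℝ) (Matrix.linftyOpNormedAddCommGroup (m := n) (n := n) (α := ℝ)).toUniformSpace.toTopologicalSpace _ Ω _ (fun ω => ∑ t ∈ Finset.range (X ω + 1),
        ((μ {ω' | t ≤ X ω'}).toReal)⁻¹ • (D * P ^ t)) μ ∧
      Filter.Tendsto (fun t : ℕ => ∑ l ∈ Finset.Icc 1 t, P ^ (t - l) * D * P ^ (l - 1))
        Filter.atTop
        (nhds (Pi * ∫ ω, (∑ t ∈ Finset.range (X ω + 1),
          ((μ {ω' | t ≤ X ω'}).toReal)⁻¹ • (D * P ^ t)) ∂μ)) := by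
  classical
  haveI : CompleteSpace (Matrix n n ℝ) := FiniteDimensional.complete ℝ _
  -- notation
  set c : ℕ → ℝ := fun t => (μ {ω' | t ≤ X ω'}).toReal with hc_def
  have hmeas : ∀ t : ℕ, MeasurableSet {ω | t ≤ X ω} := fun t => hX measurableSet_Ici
  have hcpos : ∀ t, 0 < c t := fun t =>
    ENNReal.toReal_pos (hpos t).ne' (measure_ne_top μ _)
  -- D * Pi = 0
  have hDPi : D * Pi = 0 := by
    ext i j
    have h0 : ∑ k, D i k = 0 := by
      have := congrFun hD i
      simpa [Matrix.mulVec, dotProduct] using this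
    simp only [Matrix.mul_apply, hPi, Matrix.zero_apply]
    rw [← Finset.sum_mul, h0, zero_mul]
  have hDP : ∀ m : ℕ, D * P ^ m = D * (P ^ m - Pi) := fun m => by
    rw [mul_sub, hDPi, sub_zero]
  have hMnorm : ∀ t : ℕ, ‖D * P ^ t‖ ≤ ‖D‖ * (C * r ^ t) := by
    intro t
    rw [hDP t]
    refine (norm_mul_le _ _).trans ?_
    exact mul_le_mul_of_nonneg_left (hgeo t) (norm_nonneg D)
  have hMsummable : Summable (fun t : ℕ => ‖D * P ^ t‖) := by
    refine Summable.of_nonneg_of_le (fun t => norm_nonneg _) hMnorm ?_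
    exact ((summable_geometric_of_lt_one hr0 hr1).mul_left C).mul_left ‖D‖
  have hS : Summable (fun t : ℕ => D * P ^ t) := hMsummable.of_norm
  set S : Matrix n n ℝ := ∑' t : ℕ, D * P ^ t with hS_def
  -- the indicator pieces
  set f : ℕ → Ω → Matrix n n ℝ :=
    fun t => Set.indicator {ω | t ≤ X ω} (fun _ => (c t)⁻¹ • (D * P ^ t)) with hf_def
  have hf_eval : ∀ t ω, f t ω = if t ≤ X ω then (c t)⁻¹ • (D * P ^ t) else 0 := by
    intro t ω
    simp [hf_def, Set.indicator_apply, Set.mem_setOf_eq]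
  have hf_int : ∀ t, @Integrable (Matrix n n ℝ) (Matrix.linftyOpNormedAddCommGroup (m := n) (n := n) (α := ℝ)).toUniformSpace.toTopologicalSpace _ Ω _ (f t) μ := fun t =>
    (integrable_const _).indicator (hmeas t)
  have hΓfin : ∀ ω, ∑ t ∈ Finset.range (X ω + 1), (c t)⁻¹ • (D * P ^ t)
      = ∑ t ∈ Finset.range (X ω + 1), f t ω := by
    intro ω
    refine Finset.sum_congr rfl fun t ht => ?_
    rw [hf_eval, if_pos (by simpa [Nat.lt_succ_iff] using Finset.mem_range.mp ht)]
  have hΓ : ∀ ω, ∑ t ∈ Finset.range (X ω + 1), (c t)⁻¹ • (D * P ^ t)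
      = ∑' t : ℕ, f t ω := by
    intro ω
    rw [hΓfin ω]
    refine (tsum_eq_sum fun t ht => ?_).symm
    rw [hf_eval, if_neg]
    intro h
    exact ht (Finset.mem_range.mpr (by omega))
  -- integral of each piece
  have hf_integral : ∀ t, ∫ ω, f t ω ∂μ = D * P ^ t := by
    intro t
    rw [hf_def]
    rw [integral_indicator_const _ (hmeas t), smul_smul,
      (show μ.real {ω | t ≤ X ω} = c t from rfl), mul_inv_cancel₀ (hcpos t).ne', one_smul]
  have hf_norm_integral : ∀ t, ∫ ω, ‖f t ω‖ ∂μ = ‖D * P ^ t‖ := by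
    intro t
    have h1 : (fun ω => ‖f t ω‖)
        = Set.indicator {ω | t ≤ X ω} (fun _ => ‖(c t)⁻¹ • (D * P ^ t)‖) :=
      funext fun ω => norm_indicator_eq_indicator_norm _ _
    rw [h1, integral_indicator_const _ (hmeas t), norm_smul, Real.norm_eq_abs,
      abs_of_nonneg (inv_nonneg.mpr (hcpos t).le), smul_eq_mul, ← mul_assoc,
      (show μ.real {ω | t ≤ X ω} = c t from rfl), mul_inv_cancel₀ (hcpos t).ne', one_mul]
  have hsum_int_norm : Summable (fun t => ∫ ω, ‖f t ω‖ ∂μ) := by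
    simpa only [hf_norm_integral] using hMsummable
  -- Integrability of the estimator
  have hSM : StronglyMeasurable
      (fun ω => ∑ t ∈ Finset.range (X ω + 1), (c t)⁻¹ • (D * P ^ t)) :=
    stronglyMeasurable_comp_nat
      (fun m => ∑ t ∈ Finset.range (m + 1), (c t)⁻¹ • (D * P ^ t)) hX
  have hInt : @Integrable (Matrix n n ℝ) (Matrix.linftyOpNormedAddCommGroup (m := n) (n := n) (α := ℝ)).toUniformSpace.toTopologicalSpace _ Ω _ 
      (fun ω => ∑ t ∈ Finset.range (X ω + 1), (c t)⁻¹ • (D * P ^ t)) μ := by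
    refine ⟨hSM.aestronglyMeasurable, ?_⟩
    show (∫⁻ ω, ((‖∑ t ∈ Finset.range (X ω + 1), (c t)⁻¹ • (D * P ^ t)‖₊ : NNReal) : ENNReal) ∂μ) < ⊤
    have hbound : ∀ ω, (‖∑ t ∈ Finset.range (X ω + 1), (c t)⁻¹ • (D * P ^ t)‖₊ : ENNReal)
        ≤ ∑' t : ℕ, (‖f t ω‖₊ : ENNReal) := by
      intro ω
      rw [hΓfin ω]
      calc (‖∑ t ∈ Finset.range (X ω + 1), f t ω‖₊ : ENNReal)
          ≤ ∑ t ∈ Finset.range (X ω + 1), (‖f t ω‖₊ : ENNReal) := by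
            exact_mod_cast (by exact_mod_cast nnnorm_sum_le _ _ :
              (‖∑ t ∈ Finset.range (X ω + 1), f t ω‖₊ : ENNReal)
                ≤ ((∑ t ∈ Finset.range (X ω + 1), ‖f t ω‖₊ : NNReal) : ENNReal))
        _ ≤ ∑' t : ℕ, (‖f t ω‖₊ : ENNReal) := ENNReal.sum_le_tsum _
    calc ∫⁻ ω, (‖∑ t ∈ Finset.range (X ω + 1), (c t)⁻¹ • (D * P ^ t)‖₊ : ENNReal) ∂μ
        ≤ ∫⁻ ω, ∑' t : ℕ, (‖f t ω‖₊ : ENNReal) ∂μ := lintegral_mono hbound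
      _ = ∑' t : ℕ, ∫⁻ ω, (‖f t ω‖₊ : ENNReal) ∂μ :=
          lintegral_tsum fun t => AEStronglyMeasurable.enorm (hf_int t).aestronglyMeasurable
      _ = ∑' t : ℕ, ENNReal.ofReal (∫ ω, ‖f t ω‖ ∂μ) := by
          refine tsum_congr fun t => ?_
          exact (ofReal_integral_norm_eq_lintegral_enorm (hf_int t)).symm
      _ = ENNReal.ofReal (∑' t, ∫ ω, ‖f t ω‖ ∂μ) :=
          (ENNReal.ofReal_tsum_of_nonneg
            (fun t => integral_nonneg fun ω => norm_nonneg _) hsum_int_norm).symm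
      _ < ⊤ := ENNReal.ofReal_lt_top
  refine ⟨hInt, ?_⟩
  -- value of the integral
  have hint_eq : ∫ ω, (∑ t ∈ Finset.range (X ω + 1), (c t)⁻¹ • (D * P ^ t)) ∂μ = S := by
    calc ∫ ω, (∑ t ∈ Finset.range (X ω + 1), (c t)⁻¹ • (D * P ^ t)) ∂μ
        = ∫ ω, (∑' t : ℕ, f t ω) ∂μ :=
          integral_congr_ae (Filter.Eventually.of_forall hΓ)
      _ = ∑' t : ℕ, ∫ ω, f t ω ∂μ :=
          (integral_tsum_of_summable_integral_norm hf_int hsum_int_norm).symm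
      _ = S := by rw [hS_def]; exact tsum_congr hf_integral
  rw [hint_eq]
  -- reindex the partial sums
  have hreindex : ∀ t : ℕ, ∑ l ∈ Finset.Icc 1 t, P ^ (t - l) * D * P ^ (l - 1)
      = ∑ m ∈ Finset.range t, P ^ (t - 1 - m) * (D * P ^ m) := by
    intro t
    rw [← Finset.Ico_add_one_right_eq_Icc, Finset.sum_Ico_eq_sum_range]
    refine Finset.sum_congr (by norm_num) fun m _ => ?_
    rw [show t - (1 + m) = t - 1 - m by omega, show 1 + m - 1 = m by omega, mul_assoc]
  have hdecomp : ∀ t : ℕ, ∑ m ∈ Finset.range t, P ^ (t - 1 - m) * (D * P ^ m)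
      = (∑ m ∈ Finset.range t, (P ^ (t - 1 - m) - Pi) * (D * P ^ m))
        + Pi * (∑ m ∈ Finset.range t, D * P ^ m) := by
    intro t
    rw [Finset.mul_sum, ← Finset.sum_add_distrib]
    refine Finset.sum_congr rfl fun m _ => ?_
    rw [sub_mul, sub_add_cancel]
  -- the error term goes to zero
  set K : ℝ := C * (‖D‖ * C) with hK_def
  have hK0 : 0 ≤ K := mul_nonneg hC (mul_nonneg (norm_nonneg _) hC)
  have hterm : ∀ s m : ℕ, m ≤ s →
      ‖(P ^ (s - m) - Pi) * (D * P ^ m)‖ ≤ K * r ^ s := by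
    intro s m hm
    rw [hDP m]
    refine (norm_mul_le _ _).trans ?_
    have h2 : ‖D * (P ^ m - Pi)‖ ≤ ‖D‖ * (C * r ^ m) :=
      (norm_mul_le _ _).trans (mul_le_mul_of_nonneg_left (hgeo m) (norm_nonneg D))
    calc ‖P ^ (s - m) - Pi‖ * ‖D * (P ^ m - Pi)‖
        ≤ (C * r ^ (s - m)) * (‖D‖ * (C * r ^ m)) := by
          refine mul_le_mul (hgeo _) h2 (norm_nonneg _) ?_
          positivity
      _ = K * (r ^ (s - m) * r ^ m) := by ring
      _ = K * r ^ s := by rw [← pow_add, Nat.sub_add_cancel hm]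
  have hbnd : ∀ t : ℕ, ‖∑ m ∈ Finset.range t, (P ^ (t - 1 - m) - Pi) * (D * P ^ m)‖
      ≤ (((t - 1 : ℕ) : ℝ) + 1) * (K * r ^ (t - 1)) := by
    intro t
    match t with
    | 0 => simp [hK0]
    | (s + 1) =>
      calc ‖∑ m ∈ Finset.range (s + 1), (P ^ (s + 1 - 1 - m) - Pi) * (D * P ^ m)‖
          ≤ ∑ m ∈ Finset.range (s + 1), ‖(P ^ (s - m) - Pi) * (D * P ^ m)‖ := by
            simpa using norm_sum_le _ _
        _ ≤ ∑ m ∈ Finset.range (s + 1), K * r ^ s :=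
            Finset.sum_le_sum fun m hm =>
              hterm s m (by simpa [Nat.lt_succ_iff] using Finset.mem_range.mp hm)
        _ = ((s : ℝ) + 1) * (K * r ^ s) := by
            rw [Finset.sum_const, Finset.card_range, nsmul_eq_mul]
            push_cast; ring
        _ = (((s + 1 - 1 : ℕ) : ℝ) + 1) * (K * r ^ (s + 1 - 1)) := by norm_num
  have htend0 : Filter.Tendsto (fun k : ℕ => ((k : ℝ) + 1) * (K * r ^ k))
      Filter.atTop (nhds 0) := by
    have h1 : Filter.Tendsto (fun k : ℕ => (k : ℝ) * r ^ k) Filter.atTop (nhds 0) := by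
      have := (summable_pow_mul_geometric_of_norm_lt_one 1
        (by rwa [Real.norm_eq_abs, abs_of_nonneg hr0] : ‖r‖ < 1)).tendsto_atTop_zero
      simpa using this
    have h2 : Filter.Tendsto (fun k : ℕ => r ^ k) Filter.atTop (nhds 0) :=
      tendsto_pow_atTop_nhds_zero_of_lt_one hr0 hr1
    have h3 := (h1.const_mul K).add (h2.const_mul K)
    rw [mul_zero, add_zero] at h3
    refine h3.congr fun k => ?_
    ring
  have hA0 : Filter.Tendsto
      (fun t : ℕ => ∑ m ∈ Finset.range t, (P ^ (t - 1 - m) - Pi) * (D * P ^ m))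
      Filter.atTop (nhds 0) := by
    refine squeeze_zero_norm hbnd ?_
    exact htend0.comp (Filter.tendsto_sub_atTop_nat 1)
  -- the main term converges to Pi * S
  have hB : Filter.Tendsto (fun t : ℕ => Pi * ∑ m ∈ Finset.range t, D * P ^ m)
      Filter.atTop (nhds (Pi * S)) := by
    exact (hS.hasSum.tendsto_sum_nat).const_mul Pi
  have hfinal := hA0.add hB
  rw [zero_add] at hfinal
  refine hfinal.congr fun t => ?_
  rw [← hdecomp, ← hreindex]
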